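/- Let V be a real normed space, K ⊆ V a topologically closed convex cone that is pointed (K ∩ (−K) = {0}), and D ⊆ K a convex, norm-bounded subset with 0 ∉ D. For A ∈ V let J(A) := {λ ∈ ℝ : there exists C ∈ D with λ·C − A ∈ K and λ·C + A ∈ K}, and assume J(A) is nonempty for every A ∈ V. Define ν(A) := inf J(A). Then ν is a norm on V: (1) ν(A) ≥ 0 for all A, and ν(A) = 0 if and only if A = 0; (2) ν(μ·A) = |μ|·ν(A) for all μ ∈ ℝ and A ∈ V; (3) ν(A + B) ≤ ν(A) + ν(B) for all A, B ∈ V. -/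

import Mathlib

/-- The sup-norm of transformations is a well-defined norm (Proposition 4 of the paper):
`V` is a real normed space, `K` a topologically closed, pointed convex cone, `D ⊆ K` a
convex norm-bounded set with `0 ∉ D`, `J A` the set of `λ` such that `λ·C ⪰ A ⪰ -λ·C`
for some `C ∈ D`, and `ν A = inf J A`. Then `ν` satisfies the three norm axioms. -/
theorem supNorm_is_norm {V : Type*} [NormedAddCommGroup V] [NormedSpace ℝ V]
    (K : Set V) (hKclosed : IsClosed K)
    (hKadd : ∀ x ∈ K, ∀ y ∈ K, x + y ∈ K)
    (hKsmul : ∀ c : ℝ, 0 ≤ c → ∀ x ∈ K, c • x ∈ K)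
    (hKpointed : K ∩ (-K) = {0})
    (D : Set V) (hDK : D ⊆ K) (hDconv : Convex ℝ D)
    (hDbdd : ∃ M : ℝ, ∀ x ∈ D, ‖x‖ ≤ M) (hD0 : (0 : V) ∉ D)
    (J : V → Set ℝ)
    (hJ : ∀ A : V, J A = {l : ℝ | ∃ C ∈ D, l • C - A ∈ K ∧ l • C + A ∈ K})
    (hJne : ∀ A : V, (J A).Nonempty)
    (ν : V → ℝ) (hν : ∀ A : V, ν A = sInf (J A)) :
    (∀ A : V, 0 ≤ ν A ∧ (ν A = 0 ↔ A = 0)) ∧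
    (∀ (μ : ℝ) (A : V), ν (μ • A) = |μ| * ν A) ∧
    (∀ A B : V, ν (A + B) ≤ ν A + ν B) := by
  obtain ⟨M, hM⟩ := hDbdd
  -- 0 ∈ K
  have hK0 : (0 : V) ∈ K := by
    have h : (0 : V) ∈ K ∩ (-K) := by rw [hKpointed]; rfl
    exact h.1
  -- D is nonempty
  obtain ⟨l0, hl0⟩ := hJne 0
  rw [hJ] at hl0
  obtain ⟨C0, hC0, -, -⟩ := hl0
  have hM0 : 0 ≤ M := le_trans (norm_nonneg C0) (hM C0 hC0)
  -- elements of J A are nonnegative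
  have hnonneg : ∀ A : V, ∀ l ∈ J A, 0 ≤ l := by
    intro A l hl
    rw [hJ] at hl
    obtain ⟨C, hC, h1, h2⟩ := hl
    by_contra h
    push_neg at h
    have hsum : (2 * l) • C ∈ K := by
      have hs := hKadd _ h1 _ h2
      have e : (l • C - A) + (l • C + A) = (2 * l) • C := by
        rw [two_mul, add_smul]; abel
      rwa [e] at hs
    have hneg : (2 * l) • C ∈ -K := by
      rw [Set.mem_neg]
      have hh : (-(2 * l)) • C ∈ K := hKsmul _ (by linarith) _ (hDK hC)
      rwa [neg_smul] at hh
    have hz : (2 * l) • C = 0 := by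
      have hh : (2 * l) • C ∈ K ∩ (-K) := ⟨hsum, hneg⟩
      rwa [hKpointed] at hh
    have h2l : (2 * l) ≠ 0 := by linarith
    have hC0' : C = (0 : V) := (smul_eq_zero.mp hz).resolve_left h2l
    exact hD0 (hC0' ▸ hC)
  have hbdd : ∀ A : V, BddBelow (J A) := fun A => ⟨0, fun l hl => hnonneg A l hl⟩
  have hν_nonneg : ∀ A : V, 0 ≤ ν A := by
    intro A; rw [hν]; exact le_csInf (hJne A) (hnonneg A)
  have hν_le : ∀ A : V, ∀ l ∈ J A, ν A ≤ l := by
    intro A l hl; rw [hν]; exact csInf_le (hbdd A) hl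
  -- ν 0 = 0
  have h0J : (0 : ℝ) ∈ J (0 : V) := by
    rw [hJ]
    exact ⟨C0, hC0, by simpa using hK0, by simpa using hK0⟩
  have hν0 : ν (0 : V) = 0 :=
    le_antisymm (hν_le 0 0 h0J) (hν_nonneg 0)
  -- ν A = 0 → A = 0
  have hzero : ∀ A : V, ν A = 0 → A = 0 := by
    intro A h0
    have hmem : ∀ x : V, (∀ ε : ℝ, 0 < ε → ∃ y ∈ K, dist x y < ε) → x ∈ K := by
      intro x hx
      have : x ∈ closure K := Metric.mem_closure_iff.mpr hx
      rwa [hKclosed.closure_eq] at this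
    have hsmall : ∀ ε : ℝ, 0 < ε → ∃ l ∈ J A, l < ε / (M + 1) := by
      intro ε hε
      have hlt : sInf (J A) < ε / (M + 1) := by
        rw [← hν A, h0]; positivity
      exact exists_lt_of_csInf_lt (hJne A) hlt
    have hAn : -A ∈ K ∧ A ∈ K := by
      constructor
      · apply hmem
        intro ε hε
        obtain ⟨l, hl, hlε⟩ := hsmall ε hε
        have hl0' : 0 ≤ l := hnonneg A l hl
        rw [hJ] at hl
        obtain ⟨C, hC, h1, h2⟩ := hl
        refine ⟨l • C - A, h1, ?_⟩
        have e : -A - (l • C - A) = -(l • C) := by abel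
        rw [dist_eq_norm, e, norm_neg, norm_smul, Real.norm_eq_abs, abs_of_nonneg hl0']
        have hCM := hM C hC
        have hC0'' := norm_nonneg C
        have hkey : l * (M + 1) < ε := (lt_div_iff₀ (by linarith)).mp hlε
        nlinarith
      · apply hmem
        intro ε hε
        obtain ⟨l, hl, hlε⟩ := hsmall ε hε
        have hl0' : 0 ≤ l := hnonneg A l hl
        rw [hJ] at hl
        obtain ⟨C, hC, h1, h2⟩ := hl
        refine ⟨l • C + A, h2, ?_⟩
        have e : A - (l • C + A) = -(l • C) := by abel
        rw [dist_eq_norm, e, norm_neg, norm_smul, Real.norm_eq_abs, abs_of_nonneg hl0']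
        have hCM := hM C hC
        have hC0'' := norm_nonneg C
        have hkey : l * (M + 1) < ε := (lt_div_iff₀ (by linarith)).mp hlε
        nlinarith
    have : A ∈ K ∩ (-K) := ⟨hAn.2, by rw [Set.mem_neg]; exact hAn.1⟩
    rwa [hKpointed] at this
  -- scaled membership: μ ≠ 0 → m ∈ J A → |μ| * m ∈ J (μ • A)
  have hsmul_mem : ∀ (μ : ℝ), μ ≠ 0 → ∀ (A : V), ∀ m ∈ J A, |μ| * m ∈ J (μ • A) := by
    intro μ hμ A m hm
    rw [hJ] at hm ⊢
    obtain ⟨C, hC, h1, h2⟩ := hm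
    rcases lt_or_gt_of_ne hμ with hlt | hgt
    · have habs : |μ| = -μ := abs_of_neg hlt
      refine ⟨C, hC, ?_, ?_⟩
      · rw [habs]
        have e : (-μ * m) • C - μ • A = (-μ) • (m • C + A) := by module
        rw [e]
        exact hKsmul _ (by linarith) _ h2
      · rw [habs]
        have e : (-μ * m) • C + μ • A = (-μ) • (m • C - A) := by module
        rw [e]
        exact hKsmul _ (by linarith) _ h1
    · have habs : |μ| = μ := abs_of_pos hgt
      refine ⟨C, hC, ?_, ?_⟩
      · have := hKsmul μ (le_of_lt hgt) _ h1
        rw [smul_sub, smul_smul] at this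
        rw [habs]
        exact this
      · have := hKsmul μ (le_of_lt hgt) _ h2
        rw [smul_add, smul_smul] at this
        rw [habs]
        exact this
  -- ν (μ • A) ≤ |μ| * ν A for μ ≠ 0
  have hle : ∀ (μ : ℝ), μ ≠ 0 → ∀ (A : V), ν (μ • A) ≤ |μ| * ν A := by
    intro μ hμ A
    have habs : 0 < |μ| := abs_pos.mpr hμ
    have hlb : ν (μ • A) / |μ| ≤ ν A := by
      rw [hν A]
      apply le_csInf (hJne A)
      intro m hm
      have := hν_le (μ • A) (|μ| * m) (hsmul_mem μ hμ A m hm)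
      rw [div_le_iff₀ habs]
      linarith [this]
    calc ν (μ • A) = (ν (μ • A) / |μ|) * |μ| := by field_simp
    _ ≤ ν A * |μ| := by nlinarith [hν_nonneg (μ • A)]
    _ = |μ| * ν A := mul_comm _ _
  have hhom : ∀ (μ : ℝ) (A : V), ν (μ • A) = |μ| * ν A := by
    intro μ A
    rcases eq_or_ne μ 0 with rfl | hμ
    · simp [hν0]
    · have h1 := hle μ hμ A
      have h2 := hle μ⁻¹ (inv_ne_zero hμ) (μ • A)
      rw [inv_smul_smul₀ hμ, abs_inv] at h2
      have habs : 0 < |μ| := abs_pos.mpr hμ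
      have h3 := mul_le_mul_of_nonneg_left h2 (le_of_lt habs)
      rw [← mul_assoc, mul_inv_cancel₀ (ne_of_gt habs), one_mul] at h3
      linarith
  -- triangle inequality
  have htri : ∀ A B : V, ν (A + B) ≤ ν A + ν B := by
    intro A B
    have key : ∀ l ∈ J A, ∀ m ∈ J B, ν (A + B) ≤ l + m := by
      intro l hl m hm
      have hl0' : 0 ≤ l := hnonneg A l hl
      have hm0' : 0 ≤ m := hnonneg B m hm
      rcases eq_or_lt_of_le (by linarith : (0:ℝ) ≤ l + m) with heq | hpos
      · -- l = m = 0, so A = 0 and B = 0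
        have hl' : l = 0 := by linarith
        have hm' : m = 0 := by linarith
        subst hl'; subst hm'
        rw [hJ] at hl
        obtain ⟨C, hC, h1, h2⟩ := hl
        simp only [zero_smul, zero_sub, zero_add] at h1 h2
        have hA : A = 0 := by
          have : A ∈ K ∩ (-K) := ⟨h2, by rw [Set.mem_neg]; exact h1⟩
          rwa [hKpointed] at this
        rw [hJ] at hm
        obtain ⟨C', hC', h1', h2'⟩ := hm
        simp only [zero_smul, zero_sub, zero_add] at h1' h2'
        have hB : B = 0 := by
          have : B ∈ K ∩ (-K) := ⟨h2', by rw [Set.mem_neg]; exact h1'⟩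
          rwa [hKpointed] at this
        rw [hA, hB, add_zero, hν0]
        norm_num
      · rw [hJ] at hl hm
        obtain ⟨C, hC, h1, h2⟩ := hl
        obtain ⟨C', hC', h1', h2'⟩ := hm
        set t := l / (l + m) with ht
        set s := m / (l + m) with hs
        have ht0 : 0 ≤ t := div_nonneg hl0' (le_of_lt hpos)
        have hs0 : 0 ≤ s := div_nonneg hm0' (le_of_lt hpos)
        have hts : t + s = 1 := by
          rw [ht, hs, ← add_div, div_self (ne_of_gt hpos)]
        have hCD : t • C + s • C' ∈ D := hDconv hC hC' ht0 hs0 hts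
        have hrep : (l + m) • (t • C + s • C') = l • C + m • C' := by
          rw [smul_add, smul_smul, smul_smul, ht, hs]
          rw [mul_div_cancel₀ _ (ne_of_gt hpos), mul_div_cancel₀ _ (ne_of_gt hpos)]
        apply hν_le (A + B)
        rw [hJ]
        refine ⟨t • C + s • C', hCD, ?_, ?_⟩
        · rw [hrep]
          have := hKadd _ h1 _ h1'
          convert this using 1
          abel
        · rw [hrep]
          have := hKadd _ h2 _ h2'
          convert this using 1
          abel
    have step1 : ∀ l ∈ J A, ν (A + B) - l ≤ ν B := by
      intro l hl
      rw [hν B]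
      apply le_csInf (hJne B)
      intro m hm
      linarith [key l hl m hm]
    have step2 : ν (A + B) - ν B ≤ ν A := by
      rw [hν A]
      apply le_csInf (hJne A)
      intro l hl
      linarith [step1 l hl]
    linarith
  refine ⟨fun A => ⟨hν_nonneg A, ⟨hzero A, fun h => by rw [h, hν0]⟩⟩, hhom, htri⟩
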